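/- Let (A, {·,·}) be a Poisson algebra over R, let D_A be the A-module of Kähler differentials of A, and define [a·du, b·dv] = a{u,b}dv + b{a,v}du + ab·d{u,v} for a,b,u,v ∈ A. Then this bracket is well-defined, skew-symmetric, and satisfies the Jacobi identity, making D_A a Lie algebra. -/

import Mathlib

/-- A Poisson bracket on a commutative ℝ-algebra `A`: an ℝ-bilinear Lie bracket
which is a derivation in each argument. -/
def IsPoissonBracket {A : Type*} [CommRing A] [Algebra ℝ A] (P : A → A → A) : Prop :=
  (∀ a b c : A, P (a + b) c = P a c + P b c) ∧
  (∀ a b c : A, P a (b + c) = P a b + P a c) ∧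
  (∀ (r : ℝ) (a b : A), P (r • a) b = r • P a b) ∧
  (∀ a : A, P a a = 0) ∧
  (∀ a b c : A, P a (P b c) + P b (P c a) + P c (P a b) = 0) ∧
  (∀ a b c : A, P a (b * c) = P a b * c + b * P a c)

namespace PoissonAux

open KaehlerDifferential

variable {A : Type*} [CommRing A] [Algebra ℝ A] {P : A → A → A}

section lemmas
variable (hP : IsPoissonBracket P)
include hP

lemma skew (a b : A) : P a b = - P b a := by
  have h := hP.2.2.2.1 (a + b)
  rw [hP.1, hP.2.1, hP.2.1, hP.2.2.2.1, hP.2.2.2.1] at h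
  linear_combination h

lemma leib_right (a b c : A) : P a (b * c) = P a b * c + b * P a c := hP.2.2.2.2.2 a b c

lemma leib_left (a b c : A) : P (a * b) c = a * P b c + b * P a c := by
  have h1 := hP.2.2.2.2.2 c a b
  have h2 := skew hP (a * b) c
  have h3 := skew hP a c
  have h4 := skew hP b c
  linear_combination h2 - h1 - b * h3 - a * h4

lemma one_left (b : A) : P 1 b = 0 := by
  have := leib_left hP 1 1 b
  rw [one_mul] at this
  linear_combination -this

lemma smul_right (r : ℝ) (a b : A) : P a (r • b) = r • P a b := by
  rw [skew hP a (r • b), hP.2.2.1, skew hP b a]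
  simp

lemma algebraMap_left (r : ℝ) (b : A) : P (algebraMap ℝ A r) b = 0 := by
  rw [Algebra.algebraMap_eq_smul_one, hP.2.2.1, one_left hP, smul_zero]

lemma zero_right (a : A) : P a 0 = 0 := by
  have := hP.2.1 a 0 0
  rw [add_zero] at this
  linear_combination -this

end lemmas

/-- The derivation `u ↦ P u b`. -/
noncomputable def pd (hP : IsPoissonBracket P) (b : A) : Derivation ℝ A A where
  toFun u := P u b
  map_add' x y := hP.1 x y b
  map_smul' r x := hP.2.2.1 r x b
  map_one_eq_zero' := one_left hP b
  leibniz' x y := by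
    simpa [smul_eq_mul] using leib_left hP x y b

@[simp] lemma pd_apply (hP : IsPoissonBracket P) (b u : A) : pd hP b u = P u b := rfl

end PoissonAux

namespace PoissonAux
open KaehlerDifferential
variable {A : Type*} [CommRing A] [Algebra ℝ A] {P : A → A → A}

lemma pd_add (hP : IsPoissonBracket P) (b c : A) : pd hP (b + c) = pd hP b + pd hP c := by
  ext u; simpa using hP.2.1 u b c

/-- `α ↦ X_α`, the "Hamiltonian-type" derivation attached to a 1-form. -/
noncomputable def xmap (hP : IsPoissonBracket P) (α : Ω[A⁄ℝ]) : Derivation ℝ A A where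
  toFun b := (linearMapEquivDerivation ℝ A).symm (pd hP b) α
  map_add' b c := by
    show (linearMapEquivDerivation ℝ A).symm (pd hP (b + c)) α = _
    rw [pd_add hP, map_add]
    rfl
  map_smul' r b := by
    have h1 : pd hP (r • b) = algebraMap ℝ A r • pd hP b := by
      ext u
      show P u (r • b) = algebraMap ℝ A r • P u b
      rw [smul_right hP, Algebra.smul_def]; rw [smul_eq_mul]
    show (linearMapEquivDerivation ℝ A).symm (pd hP (r • b)) α = _
    rw [h1, map_smul]
    simp [LinearMap.smul_apply, algebraMap_smul]
  map_one_eq_zero' := by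
    have h1 : pd hP (1 : A) = 0 := by
      ext u
      show P u 1 = 0
      rw [skew hP u 1, one_left hP, neg_zero]
    show (linearMapEquivDerivation ℝ A).symm (pd hP (1 : A)) α = 0
    rw [h1, map_zero]
    rfl
  leibniz' b c := by
    have h1 : pd hP (b * c) = b • pd hP c + c • pd hP b := by
      ext u
      show P u (b * c) = (b • pd hP c + c • pd hP b) u
      have h2 := hP.2.2.2.2.2 u b c
      simp only [Derivation.add_apply, Derivation.smul_apply, pd_apply, smul_eq_mul]
      linear_combination h2
    show (linearMapEquivDerivation ℝ A).symm (pd hP (b * c)) α = _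
    rw [h1, map_add, map_smul, map_smul]
    simp

@[simp] lemma xmap_apply (hP : IsPoissonBracket P) (α : Ω[A⁄ℝ]) (b : A) :
    xmap hP α b = (linearMapEquivDerivation ℝ A).symm (pd hP b) α := rfl

lemma xmap_smul_D (hP : IsPoissonBracket P) (a u b : A) :
    xmap hP (a • D ℝ A u) b = a * P u b := by
  rw [xmap_apply, map_smul]
  simp [smul_eq_mul]

lemma xmap_add (hP : IsPoissonBracket P) (α β : Ω[A⁄ℝ]) :
    xmap hP (α + β) = xmap hP α + xmap hP β := by
  ext b; simp

lemma xmap_zero (hP : IsPoissonBracket P) : xmap hP 0 = 0 := by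
  ext b; simp

end PoissonAux

namespace LiePart
open KaehlerDifferential Finsupp
variable {A : Type*} [CommRing A] [Algebra ℝ A]

/-- Raw Lie derivative on the free module `A →₀ A`. -/
noncomputable def Lraw (d : Derivation ℝ A A) : (A →₀ A) →ₗ[ℝ] Ω[A⁄ℝ] :=
  Finsupp.lsum ℝ fun v =>
    ((LinearMap.toSpanSingleton A (Ω[A⁄ℝ]) (D ℝ A v)).restrictScalars ℝ).comp d.toLinearMap
      + (LinearMap.toSpanSingleton A (Ω[A⁄ℝ]) (D ℝ A (d v))).restrictScalars ℝ

@[simp] lemma Lraw_single (d : Derivation ℝ A A) (v b : A) :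
    Lraw d (Finsupp.single v b) = d b • D ℝ A v + b • D ℝ A (d v) := by
  simp [Lraw, LinearMap.toSpanSingleton_apply]

lemma Lraw_ker (d : Derivation ℝ A A) :
    ∀ x ∈ kerTotal ℝ A, ∀ a : A, Lraw d (a • x) = 0 := by
  intro x hx
  induction hx using Submodule.span_induction with
  | mem x hx =>
    intro a
    obtain (⟨⟨y, z⟩, rfl⟩ | ⟨⟨y, z⟩, rfl⟩) | ⟨r, rfl⟩ := hx
    · simp only [smul_add, smul_sub, Finsupp.smul_single, smul_eq_mul, mul_one, map_add, map_sub,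
        Lraw_single, d.map_add, (D ℝ A).map_add]
      module
    · simp only [smul_add, smul_sub, Finsupp.smul_single, smul_eq_mul, mul_one, map_add, map_sub,
        Lraw_single, d.leibniz, (D ℝ A).leibniz, smul_eq_mul]
      module
    · simp only [Finsupp.smul_single, smul_eq_mul, mul_one, Lraw_single,
        d.map_algebraMap, (D ℝ A).map_algebraMap, map_zero, smul_zero, zero_add, smul_zero]
  | zero => intro a; simp
  | add x y _ _ hx hy => intro a; rw [smul_add, map_add, hx, hy, add_zero]
  | smul c x _ hx => intro a; rw [smul_smul]; exact hx _

/-- The Lie derivative along a derivation, as an `ℝ`-linear map on Kähler differentials. -/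
noncomputable def Lie (d : Derivation ℝ A A) : Ω[A⁄ℝ] →ₗ[ℝ] Ω[A⁄ℝ] :=
  (((kerTotal ℝ A).restrictScalars ℝ).liftQ (Lraw d)
      (fun x hx => by simpa using Lraw_ker d x hx 1)).comp
    ((Submodule.Quotient.restrictScalarsEquiv ℝ (kerTotal ℝ A)).symm.toLinearMap.comp
      ((quotKerTotalEquiv ℝ A).symm.toLinearMap.restrictScalars ℝ))

lemma Lie_smul_D (d : Derivation ℝ A A) (b v : A) :
    Lie d (b • D ℝ A v) = d b • D ℝ A v + b • D ℝ A (d v) := by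
  have h1 : (quotKerTotalEquiv ℝ A).symm (b • D ℝ A v)
      = Submodule.Quotient.mk (Finsupp.single v b) := by
    rw [map_smul]
    have h2 : (quotKerTotalEquiv ℝ A).symm (D ℝ A v)
        = Submodule.Quotient.mk (Finsupp.single v 1) :=
      Derivation.congr_fun (quotKerTotalEquiv_symm_comp_D ℝ A) v
    rw [h2, ← Submodule.Quotient.mk_smul, Finsupp.smul_single, smul_eq_mul, mul_one]
  simp only [Lie, LinearMap.comp_apply, LinearMap.coe_restrictScalars, LinearEquiv.coe_coe, h1,
    Submodule.Quotient.restrictScalarsEquiv_symm_mk, Submodule.liftQ_apply, Lraw_single]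

end LiePart

namespace PoissonAux
open KaehlerDifferential LiePart
variable {A : Type*} [CommRing A] [Algebra ℝ A] {P : A → A → A}

lemma mem_clos (ω : Ω[A⁄ℝ]) :
    ω ∈ AddSubmonoid.closure {x : Ω[A⁄ℝ] | ∃ b v : A, x = b • D ℝ A v} := by
  have h1 : ω ∈ Submodule.span A (Set.range (D ℝ A)) := by
    rw [span_range_derivation]; trivial
  induction h1 using Submodule.span_induction with
  | mem x hx =>
    obtain ⟨v, rfl⟩ := hx
    exact AddSubmonoid.subset_closure ⟨1, v, (one_smul _ _).symm⟩
  | zero => exact zero_mem _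
  | add x y _ _ hx hy => exact add_mem hx hy
  | smul a x h hx =>
    clear h
    induction hx using AddSubmonoid.closure_induction with
    | mem y hy => obtain ⟨b, v, rfl⟩ := hy
                  exact AddSubmonoid.subset_closure ⟨a * b, v, (smul_smul a b _)⟩
    | zero => rw [smul_zero]; exact zero_mem _
    | add y z _ _ hy hz => rw [smul_add]; exact add_mem hy hz

lemma omega_induction {p : Ω[A⁄ℝ] → Prop} (h0 : p 0) (hadd : ∀ x y, p x → p y → p (x + y))
    (hS : ∀ b v : A, p (b • D ℝ A v)) : ∀ ω, p ω := by
  intro ω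
  have h := mem_clos ω
  induction h using AddSubmonoid.closure_induction with
  | mem y hy => obtain ⟨b, v, rfl⟩ := hy; exact hS b v
  | zero => exact h0
  | add y z _ _ hy hz => exact hadd _ _ hy hz

/-- The Koszul bracket on 1-forms. -/
noncomputable def Br (hP : IsPoissonBracket P) (α β : Ω[A⁄ℝ]) : Ω[A⁄ℝ] :=
  Lie (xmap hP α) β - Lie (xmap hP β) α
    - D ℝ A ((xmap hP α).liftKaehlerDifferential β)

lemma Bgen (hP : IsPoissonBracket P) (a u b v : A) :
    Br hP (a • D ℝ A u) (b • D ℝ A v) =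
      (a * P u b) • D ℝ A v + (b * P a v) • D ℝ A u + (a * b) • D ℝ A (P u v) := by
  have hx : ∀ c : A, xmap hP (a • D ℝ A u) c = a * P u c := xmap_smul_D hP a u
  have hy : ∀ c : A, xmap hP (b • D ℝ A v) c = b * P v c := xmap_smul_D hP b v
  have hpi : (xmap hP (a • D ℝ A u)).liftKaehlerDifferential (b • D ℝ A v)
      = b * (a * P u v) := by
    rw [map_smul, Derivation.liftKaehlerDifferential_comp_D, hx, smul_eq_mul]
  rw [Br, Lie_smul_D, Lie_smul_D, hpi, hx, hx, hy, hy]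
  rw [skew hP v a, skew hP v u]
  simp only [(D ℝ A).leibniz, mul_neg, map_neg, smul_neg, neg_smul]
  module

end PoissonAux

namespace PoissonAux
open KaehlerDifferential LiePart
variable {A : Type*} [CommRing A] [Algebra ℝ A] {P : A → A → A}

lemma Lie_add_d (d₁ d₂ : Derivation ℝ A A) (ω : Ω[A⁄ℝ]) :
    Lie (d₁ + d₂) ω = Lie d₁ ω + Lie d₂ ω := by
  induction ω using omega_induction with
  | h0 => simp
  | hadd x y hx hy =>
    rw [map_add, map_add, map_add, hx, hy]
    abel
  | hS b v =>
    rw [Lie_smul_D, Lie_smul_D, Lie_smul_D, Derivation.add_apply, Derivation.add_apply,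
      map_add]
    module

lemma lift_add (d₁ d₂ : Derivation ℝ A A) :
    (d₁ + d₂).liftKaehlerDifferential
      = d₁.liftKaehlerDifferential + d₂.liftKaehlerDifferential := by
  refine Derivation.liftKaehlerDifferential_unique _ _ ?_
  ext x
  simp

lemma Badd1 (hP : IsPoissonBracket P) (α β γ : Ω[A⁄ℝ]) :
    Br hP (α + β) γ = Br hP α γ + Br hP β γ := by
  simp only [Br, xmap_add hP, Lie_add_d, map_add, lift_add, LinearMap.add_apply]
  abel

lemma Badd2 (hP : IsPoissonBracket P) (α β γ : Ω[A⁄ℝ]) :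
    Br hP α (β + γ) = Br hP α β + Br hP α γ := by
  simp only [Br, xmap_add hP, Lie_add_d, map_add, lift_add, LinearMap.add_apply]
  abel

lemma Bzero1 (hP : IsPoissonBracket P) (γ : Ω[A⁄ℝ]) : Br hP 0 γ = 0 := by
  have h := Badd1 hP 0 0 γ
  rw [add_zero] at h
  exact right_eq_add.mp h

lemma Bzero2 (hP : IsPoissonBracket P) (γ : Ω[A⁄ℝ]) : Br hP γ 0 = 0 := by
  have h := Badd2 hP γ 0 0
  rw [add_zero] at h
  exact right_eq_add.mp h

lemma Bskew (hP : IsPoissonBracket P) (α β : Ω[A⁄ℝ]) : Br hP α β = - Br hP β α := by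
  rw [eq_neg_iff_add_eq_zero]
  induction α using omega_induction with
  | h0 => rw [Bzero1, Bzero2, add_zero]
  | hadd x y hx hy =>
    rw [Badd1, Badd2]
    calc Br hP x β + Br hP y β + (Br hP β x + Br hP β y)
        = (Br hP x β + Br hP β x) + (Br hP y β + Br hP β y) := by abel
      _ = 0 := by rw [hx, hy, add_zero]
  | hS a u =>
    induction β using omega_induction with
    | h0 => rw [Bzero1, Bzero2, add_zero]
    | hadd x y hx hy =>
      rw [Badd1, Badd2]
      calc Br hP (a • D ℝ A u) x + Br hP (a • D ℝ A u) y + (Br hP x (a • D ℝ A u) + Br hP y (a • D ℝ A u))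
          = (Br hP (a • D ℝ A u) x + Br hP x (a • D ℝ A u))
            + (Br hP (a • D ℝ A u) y + Br hP y (a • D ℝ A u)) := by abel
        _ = 0 := by rw [hx, hy, add_zero]
    | hS b v =>
      rw [Bgen hP, Bgen hP]
      have e1 : P v a = - P a v := skew hP v a
      have e2 : P u b = - P b u := skew hP u b
      have e3 : D ℝ A (P v u) = - D ℝ A (P u v) := by rw [skew hP v u, map_neg]
      linear_combination (norm := module) e1 • (b • D ℝ A u) + e2 • (a • D ℝ A v)
        + (b * a) • e3

end PoissonAux

namespace PoissonAux
open KaehlerDifferential LiePart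
variable {A : Type*} [CommRing A] [Algebra ℝ A] {P : A → A → A}

lemma Bjac_gen (hP : IsPoissonBracket P) (a u b v c w : A) :
    Br hP (a • D ℝ A u) (Br hP (b • D ℝ A v) (c • D ℝ A w))
      + Br hP (b • D ℝ A v) (Br hP (c • D ℝ A w) (a • D ℝ A u))
      + Br hP (c • D ℝ A w) (Br hP (a • D ℝ A u) (b • D ℝ A v)) = 0 := by
  have hj := hP.2.2.2.2.1
  have hl := hP.2.2.2.2.2
  have e_aw : P a w = -P w a := skew hP a w
  have e_bw : P b w = -P w b := skew hP b w
  have e_av : P a v = -P v a := skew hP a v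
  have e_ub : P u b = -P b u := skew hP u b
  have e_uc : P u c = -P c u := skew hP u c
  have e_vc : P v c = -P c v := skew hP v c
  have EDuv : D ℝ A (P v u) = - D ℝ A (P u v) := by rw [skew hP v u, map_neg]
  have EDvw : D ℝ A (P w v) = - D ℝ A (P v w) := by rw [skew hP w v, map_neg]
  have EDuw : D ℝ A (P w u) = - D ℝ A (P u w) := by rw [skew hP w u, map_neg]
  have EDD : D ℝ A (P u (P v w)) + D ℝ A (P v (P w u)) + D ℝ A (P w (P u v)) = 0 := by
    rw [← map_add, ← map_add, hj u v w, map_zero]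
  simp only [Bgen hP, Badd2 hP]
  simp only [hl]
  linear_combination (norm := module)
    e_aw • ((b * P v c) • D ℝ A u)
    + e_bw • ((c * P a v) • D ℝ A u)
    + hj a v w • ((b * c) • D ℝ A u)
    + e_uc • ((a * P b w) • D ℝ A v)
    + e_ub • ((c * P w a) • D ℝ A v)
    + hj u b w • ((a * c) • D ℝ A v)
    + e_vc • ((a * P u b) • D ℝ A w)
    + e_av • ((b * P c u) • D ℝ A w)
    + hj u v c • ((a * b) • D ℝ A w)
    + (b * (c * P w a)) • EDuv
    + e_bw • ((a * c) • D ℝ A (P u v))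
    + (c * (a * P u b)) • EDvw
    + e_uc • ((a * b) • D ℝ A (P v w))
    + (b * (P v c * a + c * P v a) + c * (b * P a v)) • EDuw
    + e_av • (-((b * c) • D ℝ A (P u w)))
    + (a * (b * c)) • EDD

end PoissonAux


open KaehlerDifferential in
/-- For a Poisson algebra `(A, {·,·})`, the formula
`[a du, b dv] = a{u,b} dv + b{a,v} du + ab d{u,v}` yields a well-defined
skew-symmetric bracket on the `A`-module `Ω[A⁄ℝ]` of Kähler differentials which
satisfies the Jacobi identity, i.e. a Lie algebra structure on `Ω[A⁄ℝ]`. -/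
theorem kaehler_differentials_lie_bracket {A : Type*} [CommRing A] [Algebra ℝ A]
    (P : A → A → A) (hP : IsPoissonBracket P) :
    ∃ B : Ω[A⁄ℝ] → Ω[A⁄ℝ] → Ω[A⁄ℝ],
      (∀ α β γ : Ω[A⁄ℝ], B (α + β) γ = B α γ + B β γ) ∧
      (∀ α β γ : Ω[A⁄ℝ], B α (β + γ) = B α β + B α γ) ∧
      (∀ α β : Ω[A⁄ℝ], B α β = - B β α) ∧
      (∀ α β γ : Ω[A⁄ℝ], B α (B β γ) + B β (B γ α) + B γ (B α β) = 0) ∧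
      (∀ a b u v : A,
        B (a • D ℝ A u) (b • D ℝ A v) =
          (a * P u b) • D ℝ A v + (b * P a v) • D ℝ A u +
            (a * b) • D ℝ A (P u v)) := by
  refine ⟨PoissonAux.Br hP, PoissonAux.Badd1 hP, PoissonAux.Badd2 hP, PoissonAux.Bskew hP, ?_,
    fun a b u v => PoissonAux.Bgen hP a u b v⟩
  intro α β γ
  induction α using PoissonAux.omega_induction with
  | h0 => simp [PoissonAux.Bzero1 hP, PoissonAux.Bzero2 hP]
  | hadd x y hx hy =>
    simp only [PoissonAux.Badd1 hP, PoissonAux.Badd2 hP]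
    linear_combination (norm := abel) hx + hy
  | hS a u =>
    induction β using PoissonAux.omega_induction with
    | h0 => simp [PoissonAux.Bzero1 hP, PoissonAux.Bzero2 hP]
    | hadd x y hx hy =>
      simp only [PoissonAux.Badd1 hP, PoissonAux.Badd2 hP]
      linear_combination (norm := abel) hx + hy
    | hS b v =>
      induction γ using PoissonAux.omega_induction with
      | h0 => simp [PoissonAux.Bzero1 hP, PoissonAux.Bzero2 hP]
      | hadd x y hx hy =>
        simp only [PoissonAux.Badd1 hP, PoissonAux.Badd2 hP]
        linear_combination (norm := abel) hx + hy
      | hS c w => exact PoissonAux.Bjac_gen hP a u b v c w
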